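/- Let β = (1/12)·ln(1/(1−e^{−2})) (the root of ln(1−e^{−12β}) = −2), let 0 < α < β, and for even n let p = p(n) = (β−α)/ln(n). Sample a random seed set S on the toroidal mesh of size n from the product Bernoulli(p) measure, and define the derived seed set S' on the grid (ZMod (n/2)) × (ZMod (n/2)) by: (i,j) ∈ S' iff at least one of the four vertices (2i,2j), (2i+1,2j), (2i,2j+1), (2i+1,2j+1) belongs to S. Let l = ⌊ln n⌋. Then the probability that the derived grid contains a bad rectangle with dimensions 3l × l or l × 3l tends to 0 as n → ∞ (over even n). -/

import Mathlib

open MeasureTheory Filter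

/-- The toroidal mesh of size `n`: vertices `(ZMod n) × (ZMod n)`, with `(i,j)`
adjacent to `(i±1,j)` and `(i,j±1)`. -/
def torus (n : ℕ) : SimpleGraph (ZMod n × ZMod n) :=
  SimpleGraph.fromRel (fun v w => w = (v.1 + 1, v.2) ∨ w = (v.1, v.2 + 1))

/-- One step of the majority coloring process with threshold 2: a vertex turns black
if it has at least two black neighbors; black vertices stay black. -/
def colorStep {V : Type*} (G : SimpleGraph V) (S : Set V) : Set V :=
  S ∪ {v | ∃ u w, u ≠ w ∧ G.Adj v u ∧ G.Adj v w ∧ u ∈ S ∧ w ∈ S}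

/-- `S` is a dynamo if every vertex eventually turns black. -/
def IsDynamo {V : Type*} (G : SimpleGraph V) (S : Set V) : Prop :=
  ∀ v, ∃ t, v ∈ (colorStep G)^[t] S

/-- The Bernoulli(p) measure on `Bool`. -/
noncomputable def bernoulliMeasure (p : ℝ) : Measure Bool :=
  ENNReal.ofReal p • Measure.dirac true + ENNReal.ofReal (1 - p) • Measure.dirac false

instance (p : ℝ) : IsFiniteMeasure (bernoulliMeasure p) := by
  constructor
  simp [bernoulliMeasure, ENNReal.add_lt_top, ENNReal.ofReal_lt_top]

/-- The product Bernoulli(p) measure on subsets (indicator functions) of `V`. -/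
noncomputable def seedMeasure (V : Type*) [Fintype V] (p : ℝ) : Measure (V → Bool) :=
  Measure.pi fun _ => bernoulliMeasure p

/-- The derived seed set on the grid `(ZMod k) × (ZMod k)` obtained from a seed
configuration `f` on the toroidal mesh of size `2k`: a vertex `(i,j)` belongs to it
iff one of the four corresponding vertices `(2i+a, 2j+b)`, `a,b ∈ {0,1}`, is a seed. -/
def derivedSeed (k : ℕ) (f : ZMod (2 * k) × ZMod (2 * k) → Bool) :
    ZMod k × ZMod k → Prop :=
  fun v => ∃ a b : ℕ, a ≤ 1 ∧ b ≤ 1 ∧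
    f (((2 * v.1.val + a : ℕ) : ZMod (2 * k)), ((2 * v.2.val + b : ℕ) : ZMod (2 * k))) = true

/-- Every one of the `h` rows of the rectangle at `(x,y)` of width `w` and height `h`
contains an element of `S`. -/
def rowsCovered (k : ℕ) (S : ZMod k × ZMod k → Prop) (x y : ZMod k) (w h : ℕ) : Prop :=
  ∀ j : ℕ, j < h → ∃ i : ℕ, i < w ∧ S (x + (i : ZMod k), y + (j : ZMod k))

/-- Every one of the `w` columns of the rectangle at `(x,y)` of width `w` and height `h`
contains an element of `S`. -/
def colsCovered (k : ℕ) (S : ZMod k × ZMod k → Prop) (x y : ZMod k) (w h : ℕ) : Prop :=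
  ∀ i : ℕ, i < w → ∃ j : ℕ, j < h ∧ S (x + (i : ZMod k), y + (j : ZMod k))

/-! ### Auxiliary lemmas -/

section SeedMeasure

noncomputable def W (p : ℝ) : Bool → ENNReal :=
  fun b => if b then ENNReal.ofReal p else ENNReal.ofReal (1 - p)

lemma bern_singleton (p : ℝ) (b : Bool) : bernoulliMeasure p {b} = W p b := by
  cases b <;> simp [bernoulliMeasure, W, Measure.dirac_apply]

lemma W_sum (p : ℝ) (h0 : 0 ≤ p) (h1 : p ≤ 1) : W p true + W p false = 1 := by
  simp only [W, if_true, if_false, Bool.false_eq_true]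
  rw [← ENNReal.ofReal_add h0 (by linarith)]
  norm_num

lemma bern_false (p : ℝ) : bernoulliMeasure p {false} = ENNReal.ofReal (1 - p) := by
  simp [bernoulliMeasure, Measure.dirac_apply]

variable {V : Type*} [Fintype V] [DecidableEq V] {p : ℝ}

lemma bern_univ (h0 : 0 ≤ p) (h1 : p ≤ 1) : bernoulliMeasure p Set.univ = 1 := by
  simp only [bernoulliMeasure, Measure.add_apply, Measure.smul_apply, Measure.dirac_apply,
    Set.mem_univ, Set.indicator_of_mem, Pi.one_apply, smul_eq_mul, mul_one]
  rw [← ENNReal.ofReal_add h0 (by linarith)]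
  norm_num

omit [DecidableEq V] in
lemma seed_singleton (f : V → Bool) :
    seedMeasure V p {f} = ∏ v, W p (f v) := by
  have : ({f} : Set (V → Bool)) = Set.pi Set.univ (fun v => {f v}) := by
    ext g; simp [eq_comm, funext_iff, Set.mem_pi]
  rw [seedMeasure, this, Measure.pi_pi]
  simp [bern_singleton]

lemma seed_finset (F : Finset (V → Bool)) :
    seedMeasure V p (F : Set (V → Bool)) = ∑ f ∈ F, ∏ v, W p (f v) := by
  have : (F : Set (V → Bool)) = ⋃ f ∈ F, ({f} : Set (V → Bool)) := by ext g; simp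
  rw [this, measure_biUnion_finset]
  · exact Finset.sum_congr rfl fun f _ => seed_singleton f
  · intro a _ b _ hab
    simp [Function.onFun, Set.disjoint_singleton_left, hab]
  · intro f _; exact measurableSet_singleton f

lemma seed_apply (s : Set (V → Bool)) [DecidablePred (· ∈ s)] :
    seedMeasure V p s = ∑ f : V → Bool, if f ∈ s then ∏ v, W p (f v) else 0 := by
  have h1 : s = ((Finset.univ.filter (· ∈ s) : Finset (V → Bool)) : Set (V → Bool)) := by
    ext g; simp
  calc seedMeasure V p s
      = seedMeasure V p ((Finset.univ.filter (· ∈ s) : Finset (V → Bool)) : Set (V → Bool)) := by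
        exact congrArg _ h1
    _ = ∑ f ∈ Finset.univ.filter (· ∈ s), ∏ v, W p (f v) := seed_finset _
    _ = ∑ f : V → Bool, if f ∈ s then ∏ v, W p (f v) else 0 := by
        rw [Finset.sum_filter]

lemma blockMass (B : Type*) [Fintype B] [DecidableEq B] (h0 : 0 ≤ p) (h1 : p ≤ 1) :
    ∑ h : B → Bool, ∏ v, W p (h v) = 1 := by
  have hb : ∑ b : Bool, W p b = 1 := by rw [Fintype.sum_bool]; exact W_sum p h0 h1
  calc ∑ h : B → Bool, ∏ v, W p (h v)
      = ∑ h ∈ Fintype.piFinset (fun _ : B => (Finset.univ : Finset Bool)), ∏ v, W p (h v) := by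
        rw [Fintype.piFinset_univ]
    _ = ∏ _v : B, ∑ b : Bool, W p b := (Finset.prod_univ_sum _ _).symm
    _ = ∏ _v : B, (1 : ENNReal) := Finset.prod_congr rfl fun _ _ => hb
    _ = 1 := Finset.prod_const_one

lemma seed_factor (h0 : 0 ≤ p) (h1 : p ≤ 1) (A : Finset V) (s t : Set (V → Bool))
    (hs : ∀ f g : V → Bool, (∀ v ∈ A, f v = g v) → f ∈ s → g ∈ s)
    (ht : ∀ f g : V → Bool, (∀ v ∉ A, f v = g v) → f ∈ t → g ∈ t) :
    seedMeasure V p (s ∩ t) = seedMeasure V p s * seedMeasure V p t := by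
  classical
  set P : (V → Bool) → ENNReal := fun f => ∏ v, W p (f v) with hPdef
  set m : (V → Bool) → (V → Bool) → (V → Bool) := fun a b v => if v ∈ A then a v else b v
    with hmdef
  have hminv : Function.Involutive
      (fun q : (V → Bool) × (V → Bool) => (m q.1 q.2, m q.2 q.1)) := by
    rintro ⟨a, b⟩
    simp only [Prod.mk.injEq]
    constructor <;> funext v <;> by_cases hv : v ∈ A <;> simp [hmdef, hv]
  have hPm : ∀ a b : V → Bool, P (m a b) * P (m b a) = P a * P b := by
    intro a b
    simp only [hPdef]
    rw [← Finset.prod_mul_distrib, ← Finset.prod_mul_distrib]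
    refine Finset.prod_congr rfl fun v _ => ?_
    by_cases hv : v ∈ A <;> simp [hmdef, hv, mul_comm]
  have hms : ∀ a b : V → Bool, (m a b ∈ s ↔ a ∈ s) := by
    intro a b
    have h1 : ∀ v ∈ A, m a b v = a v := fun v hv => by simp [hmdef, hv]
    exact ⟨fun h => hs _ _ h1 h, fun h => hs _ _ (fun v hv => (h1 v hv).symm) h⟩
  have hmt : ∀ a b : V → Bool, (m a b ∈ t ↔ b ∈ t) := by
    intro a b
    have h1 : ∀ v ∉ A, m a b v = b v := fun v hv => by simp [hmdef, hv]
    exact ⟨fun h => ht _ _ h1 h, fun h => ht _ _ (fun v hv => (h1 v hv).symm) h⟩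
  have hmass : ∑ f : V → Bool, P f = 1 := blockMass V h0 h1
  set σ : ((V → Bool) × (V → Bool)) ≃ ((V → Bool) × (V → Bool)) := hminv.toPerm _ with hσ
  have key : ∀ q : (V → Bool) × (V → Bool),
      (if (σ q).1 ∈ s ∩ t then P (σ q).1 else 0) * P (σ q).2
        = (if q.1 ∈ s then P q.1 else 0) * (if q.2 ∈ t then P q.2 else 0) := by
    rintro ⟨a, b⟩
    have hσq : σ (a, b) = (m a b, m b a) := rfl
    rw [hσq]
    by_cases ha : a ∈ s <;> by_cases hb : b ∈ t
    · rw [if_pos ⟨(hms a b).mpr ha, (hmt a b).mpr hb⟩, if_pos ha, if_pos hb, hPm]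
    · rw [if_neg (fun c => hb ((hmt a b).mp c.2)), if_neg hb, zero_mul, mul_zero]
    · rw [if_neg (fun c => ha ((hms a b).mp c.1)), if_neg ha, zero_mul, zero_mul]
    · rw [if_neg (fun c => ha ((hms a b).mp c.1)), if_neg ha, zero_mul, zero_mul]
  calc seedMeasure V p (s ∩ t)
      = (∑ f : V → Bool, if f ∈ s ∩ t then P f else 0) * 1 := by
        rw [mul_one]; exact seed_apply _
    _ = (∑ f : V → Bool, if f ∈ s ∩ t then P f else 0) * (∑ f : V → Bool, P f) := by
        rw [hmass]
    _ = ∑ q : (V → Bool) × (V → Bool), (if q.1 ∈ s ∩ t then P q.1 else 0) * P q.2 := by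
        rw [Finset.sum_mul_sum]
        exact (Fintype.sum_prod_type
          (f := fun q : (V → Bool) × (V → Bool) => (if q.1 ∈ s ∩ t then P q.1 else 0) * P q.2)).symm
    _ = ∑ q : (V → Bool) × (V → Bool), (if (σ q).1 ∈ s ∩ t then P (σ q).1 else 0) * P (σ q).2 := by
        exact (Equiv.sum_comp σ fun q => (if q.1 ∈ s ∩ t then P q.1 else 0) * P q.2).symm
    _ = ∑ q : (V → Bool) × (V → Bool),
          (if q.1 ∈ s then P q.1 else 0) * (if q.2 ∈ t then P q.2 else 0) := by
        exact Finset.sum_congr rfl fun q _ => key q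
    _ = (∑ f : V → Bool, if f ∈ s then P f else 0) * (∑ f : V → Bool, if f ∈ t then P f else 0) := by
        rw [Finset.sum_mul_sum]
        exact Fintype.sum_prod_type
          (f := fun q : (V → Bool) × (V → Bool) =>
            (if q.1 ∈ s then P q.1 else 0) * (if q.2 ∈ t then P q.2 else 0))
    _ = seedMeasure V p s * seedMeasure V p t := by rw [seed_apply s, seed_apply t]

lemma seed_box (h0 : 0 ≤ p) (h1 : p ≤ 1) (A : Finset V) :
    seedMeasure V p {f | ∀ v ∈ A, f v = false} = ENNReal.ofReal (1 - p) ^ A.card := by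
  classical
  have hset : {f : V → Bool | ∀ v ∈ A, f v = false}
      = Set.pi Set.univ (fun v => if v ∈ A then ({false} : Set Bool) else Set.univ) := by
    ext f
    simp only [Set.mem_setOf_eq, Set.mem_pi, Set.mem_univ, forall_true_left]
    constructor
    · intro h v; by_cases hv : v ∈ A <;> simp [hv, h]
    · intro h v hv; have := h v; rw [if_pos hv] at this; exact this
  rw [seedMeasure] at *
  rw [hset, Measure.pi_pi]
  have : ∀ v : V, bernoulliMeasure p (if v ∈ A then ({false} : Set Bool) else Set.univ)
      = if v ∈ A then ENNReal.ofReal (1 - p) else 1 := by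
    intro v
    by_cases hv : v ∈ A
    · rw [if_pos hv, if_pos hv, bern_false]
    · rw [if_neg hv, if_neg hv, bern_univ h0 h1]
  rw [Finset.prod_congr rfl fun v _ => this v, Finset.prod_ite_mem, Finset.univ_inter,
    Finset.prod_const]

lemma seed_univ (h0 : 0 ≤ p) (h1 : p ≤ 1) : seedMeasure V p Set.univ = 1 := by
  have : (Set.univ : Set (V → Bool)) = {f | ∀ v ∈ (∅ : Finset V), f v = false} := by simp
  rw [this, seed_box h0 h1]; simp

lemma seed_hit_le (h0 : 0 ≤ p) (h1 : p ≤ 1) (A : Finset V) {c : ℕ} (hc : A.card ≤ c) :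
    seedMeasure V p {f | ∃ v ∈ A, f v = true} ≤ ENNReal.ofReal (1 - (1 - p) ^ c) := by
  have hcompl : {f : V → Bool | ∃ v ∈ A, f v = true}
      = {f : V → Bool | ∀ v ∈ A, f v = false}ᶜ := by
    ext f
    simp only [Set.mem_compl_iff, Set.mem_setOf_eq, not_forall]
    constructor
    · rintro ⟨v, hv, hfv⟩; exact ⟨v, hv, by simp [hfv]⟩
    · rintro ⟨v, hv, hfv⟩; exact ⟨v, hv, by simpa [Bool.not_eq_false] using hfv⟩
  have hmeas : MeasurableSet {f : V → Bool | ∀ v ∈ A, f v = false} :=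
    (Set.toFinite _).measurableSet
  rw [hcompl, measure_compl hmeas
    (by rw [seed_box h0 h1]; exact ENNReal.pow_ne_top ENNReal.ofReal_ne_top),
    seed_box h0 h1, seed_univ h0 h1]
  have hb0 : (0:ℝ) ≤ 1 - p := by linarith
  have hb1 : ENNReal.ofReal (1 - p) ≤ 1 := by
    rw [← ENNReal.ofReal_one]; exact ENNReal.ofReal_le_ofReal (by linarith)
  have hpow : ENNReal.ofReal (1 - p) ^ c ≤ ENNReal.ofReal (1 - p) ^ A.card :=
    pow_le_pow_of_le_one zero_le hb1 hc
  refine le_trans (tsub_le_tsub_left hpow 1) (le_of_eq ?_)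
  rw [← ENNReal.ofReal_pow hb0, ← ENNReal.ofReal_one, ← ENNReal.ofReal_sub _ (by positivity)]

lemma seed_rows_le (h0 : 0 ≤ p) (h1 : p ≤ 1) (m c : ℕ) (A : ℕ → Finset V)
    (hdisj : ∀ i j, i < m → j < m → i ≠ j → Disjoint (A i) (A j))
    (hcard : ∀ j, j < m → (A j).card ≤ c) :
    seedMeasure V p {f | ∀ j, j < m → ∃ v ∈ A j, f v = true}
      ≤ ENNReal.ofReal ((1 - (1 - p) ^ c) ^ m) := by
  have hb0 : (0:ℝ) ≤ 1 - p := by linarith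
  have hr0 : (0:ℝ) ≤ 1 - (1 - p) ^ c := by
    have : (1 - p) ^ c ≤ 1 := pow_le_one₀ hb0 (by linarith)
    linarith
  induction m with
  | zero =>
      have hset0 : {f : V → Bool | ∀ j, j < 0 → ∃ v ∈ A j, f v = true} = Set.univ := by
        ext f; simp
      rw [hset0, seed_univ h0 h1, pow_zero, ENNReal.ofReal_one]
  | succ m ih =>
      have hsplit : {f : V → Bool | ∀ j, j < m + 1 → ∃ v ∈ A j, f v = true}
          = {f : V → Bool | ∃ v ∈ A m, f v = true}
            ∩ {f : V → Bool | ∀ j, j < m → ∃ v ∈ A j, f v = true} := by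
        ext f
        simp only [Set.mem_inter_iff, Set.mem_setOf_eq]
        constructor
        · intro h
          exact ⟨h m (Nat.lt_succ_self m), fun j hj => h j (Nat.lt_succ_of_lt hj)⟩
        · rintro ⟨h1', h2⟩ j hj
          rcases Nat.lt_succ_iff_lt_or_eq.mp hj with hj' | rfl
          · exact h2 j hj'
          · exact h1'
      rw [hsplit, seed_factor h0 h1 (A m)]
      · have step : seedMeasure V p {f : V → Bool | ∃ v ∈ A m, f v = true}
            ≤ ENNReal.ofReal (1 - (1 - p) ^ c) :=
          seed_hit_le h0 h1 _ (hcard m (Nat.lt_succ_self m))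
        have ihm : seedMeasure V p {f : V → Bool | ∀ j, j < m → ∃ v ∈ A j, f v = true}
            ≤ ENNReal.ofReal ((1 - (1 - p) ^ c) ^ m) :=
          ih (fun i j hi hj hij => hdisj i j (Nat.lt_succ_of_lt hi) (Nat.lt_succ_of_lt hj) hij)
            (fun j hj => hcard j (Nat.lt_succ_of_lt hj))
        calc seedMeasure V p {f : V → Bool | ∃ v ∈ A m, f v = true}
              * seedMeasure V p {f : V → Bool | ∀ j, j < m → ∃ v ∈ A j, f v = true}
            ≤ ENNReal.ofReal (1 - (1 - p) ^ c) * ENNReal.ofReal ((1 - (1 - p) ^ c) ^ m) :=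
              mul_le_mul' step ihm
          _ = ENNReal.ofReal ((1 - (1 - p) ^ c) ^ (m + 1)) := by
              rw [← ENNReal.ofReal_mul hr0, pow_succ, mul_comm]
      · intro f g hfg hf
        obtain ⟨v, hv, hfv⟩ := hf
        exact ⟨v, hv, by rw [← hfg v hv]; exact hfv⟩
      · intro f g hfg hf j hj
        obtain ⟨v, hv, hfv⟩ := hf j hj
        have hvm : v ∉ A m := fun hvm =>
          Finset.disjoint_left.mp (hdisj j m (Nat.lt_succ_of_lt hj) (Nat.lt_succ_self m)
            (Nat.ne_of_lt hj)) hv hvm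
        exact ⟨v, hv, by rw [← hfg v hvm]; exact hfv⟩

end SeedMeasure

section Geometry

/-- torus vertices examined by derived row `j` of a width-`w` rectangle at (x,y). -/
def rowSet (K : ℕ) (x y : ZMod K) (w : ℕ) (j : ℕ) : Finset (ZMod (2 * K) × ZMod (2 * K)) :=
  (Finset.range w ×ˢ (Finset.range 2 ×ˢ Finset.range 2)).image
    (fun q => (((2 * (x + (q.1 : ZMod K)).val + q.2.1 : ℕ) : ZMod (2 * K)),
               ((2 * (y + (j : ZMod K)).val + q.2.2 : ℕ) : ZMod (2 * K))))

/-- torus vertices examined by derived column `i` of a height-`h` rectangle at (x,y). -/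
def colSet (K : ℕ) (x y : ZMod K) (h : ℕ) (i : ℕ) : Finset (ZMod (2 * K) × ZMod (2 * K)) :=
  (Finset.range h ×ˢ (Finset.range 2 ×ˢ Finset.range 2)).image
    (fun q => (((2 * (x + (i : ZMod K)).val + q.2.1 : ℕ) : ZMod (2 * K)),
               ((2 * (y + (q.1 : ZMod K)).val + q.2.2 : ℕ) : ZMod (2 * K))))

lemma rowSet_card (K : ℕ) (x y : ZMod K) (w j : ℕ) : (rowSet K x y w j).card ≤ 4 * w := by
  refine le_trans (Finset.card_image_le) ?_
  simp [Finset.card_product]; ring_nf; omega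

lemma colSet_card (K : ℕ) (x y : ZMod K) (h i : ℕ) : (colSet K x y h i).card ≤ 4 * h := by
  refine le_trans (Finset.card_image_le) ?_
  simp [Finset.card_product]; ring_nf; omega

lemma torus_coord_inj {K : ℕ} [NeZero K] {m m' b b' : ℕ} (hm : m < K) (hm' : m' < K)
    (hb : b < 2) (hb' : b' < 2)
    (h : ((2 * m + b : ℕ) : ZMod (2 * K)) = ((2 * m' + b' : ℕ) : ZMod (2 * K))) :
    m = m' := by
  have hK : 0 < K := Nat.pos_of_ne_zero (NeZero.ne K)
  have h1 : 2 * m + b < 2 * K := by omega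
  have h2 : 2 * m' + b' < 2 * K := by omega
  have := congrArg ZMod.val h
  rw [ZMod.val_cast_of_lt h1, ZMod.val_cast_of_lt h2] at this
  omega

lemma rowSet_disjoint {K : ℕ} [NeZero K] (x y : ZMod K) (w : ℕ) {h : ℕ} (hh : h ≤ K)
    {j j' : ℕ} (hj : j < h) (hj' : j' < h) (hne : j ≠ j') :
    Disjoint (rowSet K x y w j) (rowSet K x y w j') := by
  rw [Finset.disjoint_left]
  rintro v hv hv'
  simp only [rowSet, Finset.mem_image, Finset.mem_product, Finset.mem_range] at hv hv'
  obtain ⟨q, ⟨_, _, hq2⟩, rfl⟩ := hv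
  obtain ⟨q', ⟨_, _, hq2'⟩, heq⟩ := hv'
  have h2 := congrArg Prod.snd heq
  simp only at h2
  have hval : (y + (j' : ZMod K)).val = (y + (j : ZMod K)).val :=
    torus_coord_inj (ZMod.val_lt _) (ZMod.val_lt _) hq2' hq2 h2
  have : (j : ZMod K) = (j' : ZMod K) := by
    have := ZMod.val_injective K hval
    exact add_left_cancel this.symm
  have := congrArg ZMod.val this
  rw [ZMod.val_cast_of_lt (lt_of_lt_of_le hj hh),
    ZMod.val_cast_of_lt (lt_of_lt_of_le hj' hh)] at this
  exact hne this

lemma colSet_disjoint {K : ℕ} [NeZero K] (x y : ZMod K) (h : ℕ) {w : ℕ} (hw : w ≤ K)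
    {i i' : ℕ} (hi : i < w) (hi' : i' < w) (hne : i ≠ i') :
    Disjoint (colSet K x y h i) (colSet K x y h i') := by
  rw [Finset.disjoint_left]
  rintro v hv hv'
  simp only [colSet, Finset.mem_image, Finset.mem_product, Finset.mem_range] at hv hv'
  obtain ⟨q, ⟨_, hq1, _⟩, rfl⟩ := hv
  obtain ⟨q', ⟨_, hq1', _⟩, heq⟩ := hv'
  have h2 := congrArg Prod.fst heq
  simp only at h2
  have hval : (x + (i' : ZMod K)).val = (x + (i : ZMod K)).val :=
    torus_coord_inj (ZMod.val_lt _) (ZMod.val_lt _) hq1' hq1 h2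
  have : (i : ZMod K) = (i' : ZMod K) := by
    have := ZMod.val_injective K hval
    exact add_left_cancel this.symm
  have := congrArg ZMod.val this
  rw [ZMod.val_cast_of_lt (lt_of_lt_of_le hi hw),
    ZMod.val_cast_of_lt (lt_of_lt_of_le hi' hw)] at this
  exact hne this

lemma rowsCovered_subset {K : ℕ} (f : ZMod (2 * K) × ZMod (2 * K) → Bool) (x y : ZMod K)
    (w h : ℕ) (hcov : rowsCovered K (derivedSeed K f) x y w h) :
    ∀ j, j < h → ∃ v ∈ rowSet K x y w j, f v = true := by
  intro j hj
  obtain ⟨i, hi, a, b, ha, hb, hf⟩ := hcov j hj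
  exact ⟨_, Finset.mem_image.mpr ⟨(i, a, b), by
    simp only [Finset.mem_product, Finset.mem_range]; omega, rfl⟩, hf⟩

lemma colsCovered_subset {K : ℕ} (f : ZMod (2 * K) × ZMod (2 * K) → Bool) (x y : ZMod K)
    (w h : ℕ) (hcov : colsCovered K (derivedSeed K f) x y w h) :
    ∀ i, i < w → ∃ v ∈ colSet K x y h i, f v = true := by
  intro i hi
  obtain ⟨j, hj, a, b, ha, hb, hf⟩ := hcov i hi
  exact ⟨_, Finset.mem_image.mpr ⟨(j, a, b), by
    simp only [Finset.mem_product, Finset.mem_range]; omega, rfl⟩, hf⟩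

lemma union_bound (K : ℕ) [NeZero K] (p : ℝ) (h0 : 0 ≤ p) (h1 : p ≤ 1) (l : ℕ) (hl : l ≤ K) :
    seedMeasure (ZMod (2 * K) × ZMod (2 * K)) p
      {f | ∃ x y : ZMod K, rowsCovered K (derivedSeed K f) x y (3 * l) l ∨
           colsCovered K (derivedSeed K f) x y l (3 * l)}
      ≤ (K : ENNReal) * K * (2 * ENNReal.ofReal ((1 - (1 - p) ^ (12 * l)) ^ l)) := by
  classical
  set μ := seedMeasure (ZMod (2 * K) × ZMod (2 * K)) p with hμ
  set Q : ENNReal := ENNReal.ofReal ((1 - (1 - p) ^ (12 * l)) ^ l) with hQ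
  set R : ZMod K → ZMod K → Set (ZMod (2 * K) × ZMod (2 * K) → Bool) :=
    fun x y => {f | ∀ j, j < l → ∃ v ∈ rowSet K x y (3 * l) j, f v = true} with hR
  set C : ZMod K → ZMod K → Set (ZMod (2 * K) × ZMod (2 * K) → Bool) :=
    fun x y => {f | ∀ i, i < l → ∃ v ∈ colSet K x y (3 * l) i, f v = true} with hC
  have hRb : ∀ x y, μ (R x y) ≤ Q := by
    intro x y
    exact seed_rows_le h0 h1 l (12 * l) (fun j => rowSet K x y (3 * l) j)
      (fun i j hi hj hij => rowSet_disjoint x y (3 * l) hl hi hj hij)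
      (fun j _ => le_trans (rowSet_card K x y (3 * l) j) (by omega))
  have hCb : ∀ x y, μ (C x y) ≤ Q := by
    intro x y
    exact seed_rows_le h0 h1 l (12 * l) (fun i => colSet K x y (3 * l) i)
      (fun i j hi hj hij => colSet_disjoint x y (3 * l) hl hi hj hij)
      (fun j _ => le_trans (colSet_card K x y (3 * l) j) (by omega))
  have hsub : {f : ZMod (2 * K) × ZMod (2 * K) → Bool |
        ∃ x y : ZMod K, rowsCovered K (derivedSeed K f) x y (3 * l) l ∨
          colsCovered K (derivedSeed K f) x y l (3 * l)}
      ⊆ ⋃ x ∈ (Finset.univ : Finset (ZMod K)), ⋃ y ∈ (Finset.univ : Finset (ZMod K)),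
          (R x y ∪ C x y) := by
    rintro f ⟨x, y, hf⟩
    refine Set.mem_biUnion (Finset.mem_univ x) (Set.mem_biUnion (Finset.mem_univ y) ?_)
    rcases hf with hf | hf
    · exact Or.inl (rowsCovered_subset f x y _ _ hf)
    · exact Or.inr (colsCovered_subset f x y _ _ hf)
  calc μ _ ≤ μ (⋃ x ∈ (Finset.univ : Finset (ZMod K)),
        ⋃ y ∈ (Finset.univ : Finset (ZMod K)), (R x y ∪ C x y)) := measure_mono hsub
    _ ≤ ∑ x : ZMod K, μ (⋃ y ∈ (Finset.univ : Finset (ZMod K)), (R x y ∪ C x y)) :=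
        measure_biUnion_finset_le _ _
    _ ≤ ∑ _x : ZMod K, ∑ _y : ZMod K, (2 * Q) := by
        refine Finset.sum_le_sum fun x _ => ?_
        refine le_trans (measure_biUnion_finset_le _ _) (Finset.sum_le_sum fun y _ => ?_)
        refine le_trans (measure_union_le _ _) ?_
        calc μ (R x y) + μ (C x y) ≤ Q + Q := add_le_add (hRb x y) (hCb x y)
          _ = 2 * Q := (two_mul Q).symm
    _ = (K : ENNReal) * K * (2 * Q) := by
        simp [Finset.sum_const, ZMod.card, mul_assoc]

end Geometry

lemma beta_facts {β : ℝ} (hβ : β = (1 / 12) * Real.log (1 / (1 - Real.exp (-2)))) :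
    Real.exp (-(12 * β)) = 1 - Real.exp (-2) ∧ 0 < β ∧ β ≤ 1 / 36 := by
  have he2 : Real.exp (-2) < 1 := Real.exp_lt_one_iff.mpr (by norm_num)
  have he2' : (0:ℝ) < Real.exp (-2) := Real.exp_pos _
  have hpos : (0:ℝ) < 1 - Real.exp (-2) := by linarith
  have h4 : Real.exp (-2) ≤ 1 / 4 := by
    have h2 : (2:ℝ) ≤ Real.exp 1 := by
      have := Real.add_one_le_exp 1
      linarith
    have : (4:ℝ) ≤ Real.exp 2 := by
      have : Real.exp 2 = Real.exp 1 * Real.exp 1 := by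
        rw [← Real.exp_add]; norm_num
      nlinarith [Real.exp_pos 1]
    rw [Real.exp_neg]
    rw [inv_le_iff_one_le_mul₀ (by positivity)]
    nlinarith
  constructor
  · have h12 : 12 * β = Real.log (1 / (1 - Real.exp (-2))) := by rw [hβ]; ring
    rw [h12, Real.log_div one_ne_zero (ne_of_gt hpos), Real.log_one]
    rw [neg_sub, sub_zero, Real.exp_log hpos]
  constructor
  · rw [hβ]
    have h1 : 1 < 1 / (1 - Real.exp (-2)) := by
      rw [lt_div_iff₀ hpos]; linarith
    have := Real.log_pos h1
    linarith
  · rw [hβ]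
    have hle : 1 / (1 - Real.exp (-2)) ≤ 4 / 3 := by
      rw [div_le_div_iff₀ hpos (by norm_num)]
      linarith
    have h2 : Real.log (1 / (1 - Real.exp (-2))) ≤ Real.log (4 / 3) :=
      Real.log_le_log (by positivity) hle
    have h3 : Real.log (4 / 3) ≤ 4 / 3 - 1 := Real.log_le_sub_one_of_pos (by norm_num)
    linarith

set_option maxHeartbeats 2000000 in
/-- Let `β` be the root of `ln(1-e^{-12β}) = -2`, `0 < α < β`, and for even `n = 2k` let
`p = (β-α)/ln n`.  Then the probability that the derived grid `(ZMod k) × (ZMod k)`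
contains a bad rectangle of dimensions `3l × l` or `l × 3l` (where `l = ⌊ln n⌋`)
tends to `0` as `n → ∞` over even `n`. -/
theorem no_bad_rectangle_whp (α β : ℝ)
    (hβ : β = (1 / 12) * Real.log (1 / (1 - Real.exp (-2))))
    (hα : 0 < α) (hαβ : α < β) :
    Filter.Tendsto
      (fun k : ℕ =>
        seedMeasure (ZMod (2 * (k + 1)) × ZMod (2 * (k + 1)))
          ((β - α) / Real.log ((2 * (k + 1) : ℕ) : ℝ))
          {f | ∃ x y : ZMod (k + 1),
            rowsCovered (k + 1) (derivedSeed (k + 1) f) x y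
              (3 * ⌊Real.log ((2 * (k + 1) : ℕ) : ℝ)⌋₊) ⌊Real.log ((2 * (k + 1) : ℕ) : ℝ)⌋₊ ∨
            colsCovered (k + 1) (derivedSeed (k + 1) f) x y
              ⌊Real.log ((2 * (k + 1) : ℕ) : ℝ)⌋₊ (3 * ⌊Real.log ((2 * (k + 1) : ℕ) : ℝ)⌋₊)})
      Filter.atTop (nhds 0) := by
  obtain ⟨hexp, hβ0, hβ36⟩ := beta_facts hβ
  have hβα : 0 < β - α := by linarith
  set L : ℕ → ℝ := fun k => Real.log ((2 * (k + 1) : ℕ) : ℝ) with hLdef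
  set pp : ℕ → ℝ := fun k => (β - α) / L k with hppdef
  have hlog2 : (0.6931471803 : ℝ) < Real.log 2 := Real.log_two_gt_d9
  have hLlb : ∀ k, Real.log 2 ≤ L k := by
    intro k
    apply Real.log_le_log (by norm_num)
    push_cast; nlinarith [Nat.cast_nonneg (α := ℝ) k]
  have hLpos : ∀ k, 0 < L k := fun k => lt_of_lt_of_le (by linarith) (hLlb k)
  have hp0 : ∀ k, 0 ≤ pp k := fun k => le_of_lt (div_pos hβα (hLpos k))
  have hplt1 : ∀ k, pp k < 1 := by
    intro k
    rw [hppdef]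
    simp only
    rw [div_lt_one (hLpos k)]
    have := hLlb k; linarith
  have hp1 : ∀ k, pp k ≤ 1 := fun k => le_of_lt (hplt1 k)
  have hLk : ∀ k, L k < (k : ℝ) + 1 := by
    intro k
    have h1 : L k = Real.log 2 + Real.log ((k:ℝ) + 1) := by
      rw [hLdef]
      simp only
      push_cast
      rw [← Real.log_mul (by norm_num) (by positivity)]
    have h2 : Real.log ((k:ℝ) + 1) ≤ (k:ℝ) := by
      have := Real.log_le_sub_one_of_pos (x := (k:ℝ) + 1) (by positivity)
      linarith
    have h3 : Real.log 2 < 1 := by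
      have := Real.log_two_lt_d9; linarith
    linarith
  have hlK : ∀ k, ⌊L k⌋₊ ≤ k + 1 := by
    intro k
    have : ⌊L k⌋₊ < k + 1 := by
      rw [Nat.floor_lt (le_of_lt (hLpos k))]
      push_cast; exact hLk k
    omega
  set qs : ℝ := 1 - Real.exp (-(12 * (β - α / 2))) with hqs
  have hcstar : 0 < 12 * (β - α / 2) := by linarith
  have hqspos : 0 < qs := by
    rw [hqs]
    have : Real.exp (-(12 * (β - α / 2))) < 1 := Real.exp_lt_one_iff.mpr (by linarith)
    linarith
  have hqslt : qs < Real.exp (-2) := by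
    have h1 : Real.exp (-(12 * β)) < Real.exp (-(12 * (β - α / 2))) :=
      Real.exp_lt_exp.mpr (by linarith)
    rw [hqs]
    rw [hexp] at h1
    linarith
  set c : ℝ := -Real.log qs with hc
  have hc2 : 2 < c := by
    have := Real.log_lt_log hqspos hqslt
    rw [Real.log_exp] at this
    rw [hc]; linarith
  set D : ℕ → ℝ := fun k => 2 * Real.exp c * Real.exp ((2 - c) * L k) with hD
  have hLtop : Tendsto L atTop atTop := by
    apply Real.tendsto_log_atTop.comp
    apply tendsto_atTop_mono (fun k => ?_) tendsto_natCast_atTop_atTop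
    push_cast; nlinarith [Nat.cast_nonneg (α := ℝ) k]
  have hDto : Tendsto (fun k => ENNReal.ofReal (D k)) atTop (nhds 0) := by
    have h1 : Tendsto (fun k => (2 - c) * L k) atTop atBot :=
      Tendsto.const_mul_atTop_of_neg (by linarith) hLtop
    have h2 : Tendsto (fun k => Real.exp ((2 - c) * L k)) atTop (nhds 0) :=
      Real.tendsto_exp_atBot.comp h1
    have h3 : Tendsto D atTop (nhds 0) := by
      rw [hD]
      have := h2.const_mul (2 * Real.exp c)
      simpa using this
    have := ENNReal.tendsto_ofReal h3
    simpa using this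
  have hev : ∀ᶠ k in atTop, pp k ≤ (α / 2) / (β - α / 2) := by
    have hM : Tendsto pp atTop (nhds 0) := by
      rw [hppdef]
      simpa using Tendsto.div_atTop (tendsto_const_nhds (x := β - α)) hLtop
    have hpos : (0:ℝ) < (α / 2) / (β - α / 2) := div_pos (by linarith) (by linarith)
    exact hM.eventually (eventually_le_nhds hpos)
  refine tendsto_of_tendsto_of_tendsto_of_le_of_le' tendsto_const_nhds hDto
    (Eventually.of_forall fun k => zero_le) ?_
  filter_upwards [hev] with k hpk
  set l : ℕ := ⌊L k⌋₊ with hl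
  have hba2 : 0 < β - α / 2 := by linarith
  have hp := hp0 k
  have hq1 : pp k < 1 := hplt1 k
  have h1p : 0 < 1 - pp k := by linarith
  have hlogp : -Real.log (1 - pp k) ≤ pp k / (1 - pp k) := by
    have h := Real.log_le_sub_one_of_pos (x := 1 / (1 - pp k)) (by positivity)
    rw [Real.log_div one_ne_zero (ne_of_gt h1p), Real.log_one] at h
    have : 1 / (1 - pp k) - 1 = pp k / (1 - pp k) := by field_simp; ring
    linarith
  have hlp : (l : ℝ) * pp k ≤ β - α := by
    have hfl : (l : ℝ) ≤ L k := Nat.floor_le (le_of_lt (hLpos k))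
    have hppk : pp k = (β - α) / L k := by rw [hppdef]
    calc (l : ℝ) * pp k ≤ L k * pp k :=
          mul_le_mul_of_nonneg_right hfl hp
      _ = β - α := by
          rw [hppk]
          field_simp
          exact div_self (ne_of_gt (hLpos k))
  have h2 : (l : ℝ) * (pp k / (1 - pp k)) ≤ β - α / 2 := by
    have hd : pp k * (β - α / 2) ≤ α / 2 := (le_div_iff₀ hba2).mp hpk
    have h1 : (l : ℝ) * pp k ≤ (β - α / 2) * (1 - pp k) := by nlinarith [hlp]
    rw [mul_div_assoc', div_le_iff₀ h1p]
    linarith [h1]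
  have hpowlb : Real.exp (-(12 * (β - α / 2))) ≤ (1 - pp k) ^ (12 * l) := by
    have heq : (1 - pp k) ^ (12 * l) = Real.exp (((12 * l : ℕ) : ℝ) * Real.log (1 - pp k)) := by
      rw [Real.exp_nat_mul, Real.exp_log h1p]
    rw [heq]
    apply Real.exp_le_exp.mpr
    have ha : (12 * (l:ℝ)) * (-Real.log (1 - pp k)) ≤ (12 * (l:ℝ)) * (pp k / (1 - pp k)) :=
      mul_le_mul_of_nonneg_left hlogp (by positivity)
    push_cast
    linarith [ha, h2]
  have hr0 : 0 ≤ 1 - (1 - pp k) ^ (12 * l) := by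
    have : (1 - pp k) ^ (12 * l) ≤ 1 := pow_le_one₀ (le_of_lt h1p) (by linarith)
    linarith
  have hrq : 1 - (1 - pp k) ^ (12 * l) ≤ qs := by
    rw [hqs]; linarith [hpowlb]
  have hrl : (1 - (1 - pp k) ^ (12 * l)) ^ l ≤ qs ^ l := pow_le_pow_left₀ hr0 hrq l
  have hq : qs ^ l ≤ Real.exp c * Real.exp (-(c * L k)) := by
    have h1 : qs = Real.exp (-c) := by rw [hc, neg_neg, Real.exp_log hqspos]
    rw [h1, ← Real.exp_nat_mul, ← Real.exp_add]
    apply Real.exp_le_exp.mpr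
    have hfl2 : L k - 1 ≤ (l:ℝ) := le_of_lt (Nat.sub_one_lt_floor (L k))
    have hcpos : (0:ℝ) < c := by linarith
    have := mul_le_mul_of_nonneg_left hfl2 (le_of_lt hcpos)
    nlinarith [this]
  have hKn : ((k + 1 : ℕ) : ℝ) ≤ Real.exp (L k) := by
    rw [hLdef]
    simp only
    rw [Real.exp_log (by positivity)]
    push_cast; linarith
  have hexpeq : Real.exp (L k) * Real.exp (L k) * Real.exp (-(c * L k))
      = Real.exp ((2 - c) * L k) := by
    rw [← Real.exp_add, ← Real.exp_add]; congr 1; ring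
  have hrD : ((k + 1 : ℕ) : ℝ) * ((k + 1 : ℕ) : ℝ) * (2 * (1 - (1 - pp k) ^ (12 * l)) ^ l)
      ≤ D k := by
    have hx : (1 - (1 - pp k) ^ (12 * l)) ^ l ≤ Real.exp c * Real.exp (-(c * L k)) :=
      le_trans hrl hq
    have hxnn : 0 ≤ (1 - (1 - pp k) ^ (12 * l)) ^ l := pow_nonneg hr0 l
    have hKnn : (0:ℝ) ≤ ((k + 1 : ℕ) : ℝ) := Nat.cast_nonneg _
    calc ((k + 1 : ℕ) : ℝ) * ((k + 1 : ℕ) : ℝ) * (2 * (1 - (1 - pp k) ^ (12 * l)) ^ l)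
        ≤ Real.exp (L k) * Real.exp (L k) * (2 * (Real.exp c * Real.exp (-(c * L k)))) := by
          gcongr
      _ = 2 * Real.exp c * (Real.exp (L k) * Real.exp (L k) * Real.exp (-(c * L k))) := by ring
      _ = D k := by rw [hexpeq, hD]
  calc seedMeasure (ZMod (2 * (k + 1)) × ZMod (2 * (k + 1))) (pp k)
        {f | ∃ x y : ZMod (k + 1),
          rowsCovered (k + 1) (derivedSeed (k + 1) f) x y (3 * l) l ∨
          colsCovered (k + 1) (derivedSeed (k + 1) f) x y l (3 * l)}
      ≤ ((k + 1 : ℕ) : ENNReal) * ((k + 1 : ℕ) : ENNReal)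
          * (2 * ENNReal.ofReal ((1 - (1 - pp k) ^ (12 * l)) ^ l)) :=
        union_bound (k + 1) (pp k) hp (hp1 k) l (hlK k)
    _ = ENNReal.ofReal (((k + 1 : ℕ) : ℝ) * ((k + 1 : ℕ) : ℝ)
          * (2 * (1 - (1 - pp k) ^ (12 * l)) ^ l)) := by
        rw [ENNReal.ofReal_mul (mul_nonneg (Nat.cast_nonneg _) (Nat.cast_nonneg _)),
          ENNReal.ofReal_mul (Nat.cast_nonneg _),
          ENNReal.ofReal_mul (by norm_num : (0:ℝ) ≤ 2),
          ENNReal.ofReal_natCast, ENNReal.ofReal_ofNat]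
    _ ≤ ENNReal.ofReal (D k) := ENNReal.ofReal_le_ofReal hrD
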